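/- For every n ≥ 1, Σ_{k=1}^{n} (σ(k)/k)^2 = n · Σ_{1 ≤ d₁,d₂ ≤ n} (1/(d₁ d₂)) · (1/lcm(d₁,d₂)) + O(log² n). -/

import Mathlib

open Finset

lemma my_sigma_div (k : ℕ) (hk : 0 < k) :
    (ArithmeticFunction.sigma 1 k : ℝ) / k = ∑ d ∈ k.divisors, 1 / (d : ℝ) := by
  have h1 : (ArithmeticFunction.sigma 1 k : ℝ) = ∑ d ∈ k.divisors, ((k / d : ℕ) : ℝ) := by
    rw [Nat.sum_div_divisors k (fun d => ((d : ℕ) : ℝ))]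
    rw [ArithmeticFunction.sigma_apply]
    push_cast
    simp [pow_one]
  rw [h1, Finset.sum_div]
  apply Finset.sum_congr rfl
  intro d hd
  obtain ⟨hdvd, hk0⟩ := Nat.mem_divisors.mp hd
  have hd0 : d ≠ 0 := by
    rintro rfl
    exact hk0 (Nat.eq_zero_of_zero_dvd hdvd)
  rw [Nat.cast_div hdvd (by exact_mod_cast hd0)]
  rw [div_div, one_div, mul_comm (d:ℝ) (k:ℝ), ← div_div, div_self (by exact_mod_cast hk0 : (k:ℝ) ≠ 0), one_div]

lemma my_divisors_eq (k n : ℕ) (hk : k ∈ Finset.Icc 1 n) :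
    k.divisors = (Finset.Icc 1 n).filter (· ∣ k) := by
  rw [Finset.mem_Icc] at hk
  ext d
  simp only [Nat.mem_divisors, Finset.mem_filter, Finset.mem_Icc]
  constructor
  · rintro ⟨hdvd, hk0⟩
    exact ⟨⟨Nat.pos_of_dvd_of_pos hdvd (by omega), le_trans (Nat.le_of_dvd (by omega) hdvd) hk.2⟩, hdvd⟩
  · rintro ⟨_, hdvd⟩
    exact ⟨hdvd, by omega⟩

lemma my_count (n L : ℕ) :
    ((Finset.Icc 1 n).filter (fun k => L ∣ k)).card = n / L := by
  have h : Finset.Icc 1 n = Finset.Ioc 0 n := by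
    ext x; simp only [Finset.mem_Icc, Finset.mem_Ioc]; omega
  rw [h, Nat.Ioc_filter_dvd_card_eq_div]

lemma my_main_identity (n : ℕ) :
    ∑ k ∈ Finset.Icc 1 n, ((ArithmeticFunction.sigma 1 k : ℝ) / k) ^ 2
      = ∑ d1 ∈ Finset.Icc 1 n, ∑ d2 ∈ Finset.Icc 1 n,
          (1 / ((d1 : ℝ) * d2)) * ((n / Nat.lcm d1 d2 : ℕ) : ℝ) := by
  have step1 : ∑ k ∈ Finset.Icc 1 n, ((ArithmeticFunction.sigma 1 k : ℝ) / k) ^ 2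
      = ∑ k ∈ Finset.Icc 1 n, ∑ d1 ∈ Finset.Icc 1 n, ∑ d2 ∈ Finset.Icc 1 n,
          (if d1 ∣ k ∧ d2 ∣ k then 1 / ((d1 : ℝ) * d2) else 0) := by
    apply Finset.sum_congr rfl
    intro k hk
    have hk1 : 0 < k := by rw [Finset.mem_Icc] at hk; omega
    rw [my_sigma_div k hk1, sq, Finset.sum_mul_sum, my_divisors_eq k n hk]
    simp only [Finset.sum_filter]
    apply Finset.sum_congr rfl
    intro d1 _
    by_cases h1 : d1 ∣ k
    · simp only [if_pos h1]
      apply Finset.sum_congr rfl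
      intro d2 _
      by_cases h2 : d2 ∣ k
      · simp [h1, h2, div_mul_div_comm, mul_comm]
      · simp [h1, h2]
    · simp [h1]
  rw [step1, Finset.sum_comm]
  apply Finset.sum_congr rfl
  intro d1 _
  rw [Finset.sum_comm]
  apply Finset.sum_congr rfl
  intro d2 _
  have : ∀ k, (d1 ∣ k ∧ d2 ∣ k) ↔ Nat.lcm d1 d2 ∣ k := by
    intro k; exact (Nat.lcm_dvd_iff).symm
  rw [← my_count n (Nat.lcm d1 d2)]
  have hfe : (Finset.Icc 1 n).filter (fun k => Nat.lcm d1 d2 ∣ k)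
      = (Finset.Icc 1 n).filter (fun k => d1 ∣ k ∧ d2 ∣ k) := by
    apply Finset.filter_congr; intro k _; simp [this k]
  rw [hfe, ← Finset.sum_filter, Finset.sum_const, nsmul_eq_mul, mul_comm]

theorem sum_sigma_div_sq_asymp : ∃ C : ℝ, 0 < C ∧ ∀ n : ℕ, 1 ≤ n →
    |∑ k ∈ Finset.Icc 1 n, ((ArithmeticFunction.sigma 1 k : ℝ) / k) ^ 2
      - n * ∑ d1 ∈ Finset.Icc 1 n, ∑ d2 ∈ Finset.Icc 1 n,
          (1 / ((d1 : ℝ) * d2)) * (1 / (Nat.lcm d1 d2 : ℝ))|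
      ≤ C * (Real.log n) ^ 2 := by
  refine ⟨9, by norm_num, fun n hn => ?_⟩
  rcases eq_or_lt_of_le hn with h1 | h2
  · subst h1
    norm_num [Finset.Icc_self, ArithmeticFunction.sigma_one_apply, Nat.divisors_one,
      Real.log_one, Nat.lcm_self]
  -- rewrite difference as a double sum
  have hmul : (n : ℝ) * ∑ d1 ∈ Finset.Icc 1 n, ∑ d2 ∈ Finset.Icc 1 n,
          (1 / ((d1 : ℝ) * d2)) * (1 / (Nat.lcm d1 d2 : ℝ))
      = ∑ d1 ∈ Finset.Icc 1 n, ∑ d2 ∈ Finset.Icc 1 n,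
          (1 / ((d1 : ℝ) * d2)) * ((n : ℝ) / (Nat.lcm d1 d2 : ℝ)) := by
    rw [Finset.mul_sum]
    apply Finset.sum_congr rfl
    intro d1 _
    rw [Finset.mul_sum]
    apply Finset.sum_congr rfl
    intro d2 _
    ring
  rw [my_main_identity, hmul, ← Finset.sum_sub_distrib]
  have key : |∑ d1 ∈ Finset.Icc 1 n, (∑ d2 ∈ Finset.Icc 1 n,
          (1 / ((d1 : ℝ) * d2)) * ((n / Nat.lcm d1 d2 : ℕ) : ℝ)
        - ∑ d2 ∈ Finset.Icc 1 n, (1 / ((d1 : ℝ) * d2)) * ((n : ℝ) / (Nat.lcm d1 d2 : ℝ)))|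
      ≤ ∑ d1 ∈ Finset.Icc 1 n, ∑ d2 ∈ Finset.Icc 1 n, 1 / ((d1 : ℝ) * d2) := by
    refine (Finset.abs_sum_le_sum_abs _ _).trans ?_
    apply Finset.sum_le_sum
    intro d1 hd1
    rw [← Finset.sum_sub_distrib]
    refine (Finset.abs_sum_le_sum_abs _ _).trans ?_
    apply Finset.sum_le_sum
    intro d2 hd2
    rw [Finset.mem_Icc] at hd1 hd2
    have hL : 0 < Nat.lcm d1 d2 := Nat.pos_of_ne_zero (Nat.lcm_ne_zero (by omega) (by omega))
    rw [← mul_sub, abs_mul]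
    have h1 : |1 / ((d1 : ℝ) * d2)| = 1 / ((d1 : ℝ) * d2) := by
      rw [abs_of_nonneg]; positivity
    rw [h1]
    have h2 : |((n / Nat.lcm d1 d2 : ℕ) : ℝ) - (n : ℝ) / (Nat.lcm d1 d2 : ℝ)| ≤ 1 := by
      rw [abs_le]
      have hub := Nat.cast_div_le (m := n) (n := Nat.lcm d1 d2) (α := ℝ)
      have hlt : (n : ℝ) / (Nat.lcm d1 d2 : ℝ) < ((n / Nat.lcm d1 d2 : ℕ) : ℝ) + 1 := by
        rw [div_lt_iff₀ (by exact_mod_cast hL)]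
        have := Nat.lt_div_mul_add (a := n) hL
        calc (n : ℝ) < ((n / Nat.lcm d1 d2 * Nat.lcm d1 d2 + Nat.lcm d1 d2 : ℕ) : ℝ) := by
              exact_mod_cast this
        _ = (((n / Nat.lcm d1 d2 : ℕ) : ℝ) + 1) * (Nat.lcm d1 d2 : ℝ) := by push_cast; ring
      constructor <;> linarith
    calc 1 / ((d1 : ℝ) * d2) * |((n / Nat.lcm d1 d2 : ℕ) : ℝ) - (n : ℝ) / (Nat.lcm d1 d2 : ℝ)|
        ≤ 1 / ((d1 : ℝ) * d2) * 1 := by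
          apply mul_le_mul_of_nonneg_left h2; positivity
    _ = 1 / ((d1 : ℝ) * d2) := mul_one _
  refine key.trans ?_
  -- double sum equals harmonic squared
  have hsq : ∑ d1 ∈ Finset.Icc 1 n, ∑ d2 ∈ Finset.Icc 1 n, 1 / ((d1 : ℝ) * d2)
      = (∑ d ∈ Finset.Icc 1 n, 1 / (d : ℝ)) ^ 2 := by
    rw [sq, Finset.sum_mul_sum]
    apply Finset.sum_congr rfl; intro d1 _
    apply Finset.sum_congr rfl; intro d2 _
    rw [div_mul_div_comm, one_mul]
  rw [hsq]
  have hH : ∑ d ∈ Finset.Icc 1 n, 1 / (d : ℝ) = (harmonic n : ℝ) := by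
    rw [harmonic_eq_sum_Icc]
    push_cast
    simp [one_div]
  have hH0 : (0:ℝ) ≤ ∑ d ∈ Finset.Icc 1 n, 1 / (d : ℝ) := by positivity
  have hHle : ∑ d ∈ Finset.Icc 1 n, 1 / (d : ℝ) ≤ 1 + Real.log n := by
    rw [hH]; exact harmonic_le_one_add_log n
  have hlog : (1:ℝ)/2 ≤ Real.log n := by
    have : Real.log 2 ≤ Real.log n := by
      apply Real.log_le_log (by norm_num)
      exact_mod_cast h2
    have h2' := Real.log_two_gt_d9
    linarith
  have h3 : ∑ d ∈ Finset.Icc 1 n, 1 / (d : ℝ) ≤ 3 * Real.log n := by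
    calc ∑ d ∈ Finset.Icc 1 n, 1 / (d : ℝ) ≤ 1 + Real.log n := hHle
    _ ≤ 3 * Real.log n := by linarith
  calc (∑ d ∈ Finset.Icc 1 n, 1 / (d : ℝ)) ^ 2 ≤ (3 * Real.log n) ^ 2 := by
        apply pow_le_pow_left₀ hH0 h3
  _ = 9 * (Real.log n) ^ 2 := by ring
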